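/- Let Γ be a coalgebra over a field k, e ∈ D Γ an idempotent, and Λ ⊆ Γ a subcoalgebra. Then for every right Γ-comodule map f : Λ → Γe (where Λ carries its canonical right Γ-comodule structure), the image of f is contained in Λe; consequently Hom_{Γ}(Λ, Γe) = Hom_{Γ}(Λ, Λe). -/

import Mathlib

open TensorProduct LinearMap

noncomputable section

universe u

section DualAlgebra

variable (k : Type u) [Field k]
variable (Γ : Type u) [AddCommGroup Γ] [Module k Γ] [Coalgebra k Γ]

/-- Convolution product on the dual algebra `D Γ = Hom_k(Γ, k)`:
`(f * g)(γ) = Σ f(γ₍₁₎) g(γ₍₂₎)`. -/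
def conv (f g : Module.Dual k Γ) : Module.Dual k Γ :=
  LinearMap.mul' k k ∘ₗ TensorProduct.map f g ∘ₗ Coalgebra.comul

/-- The right hit action `γ ↼ e = Σ e(γ₍₁₎) γ₍₂₎`, as a linear endomap of `Γ`. -/
def rhit (e : Module.Dual k Γ) : Γ →ₗ[k] Γ :=
  (TensorProduct.lid k Γ).toLinearMap ∘ₗ e.rTensor Γ ∘ₗ Coalgebra.comul

/-- The left hit action `e ⇀ γ = Σ γ₍₁₎ e(γ₍₂₎)`, as a linear endomap of `Γ`. -/
def lhit (e : Module.Dual k Γ) : Γ →ₗ[k] Γ :=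
  (TensorProduct.rid k Γ).toLinearMap ∘ₗ e.lTensor Γ ∘ₗ Coalgebra.comul

/-- A subspace `Λ ⊆ Γ` is a subcoalgebra if `Δ(Λ) ⊆ Λ ⊗ Λ`. -/
def IsSubcoalgebra (p : Submodule k Γ) : Prop :=
  ∀ x ∈ p, Coalgebra.comul (R := k) x ∈ LinearMap.range (TensorProduct.mapIncl p p)

end DualAlgebra

/-- A right `Γ`-comodule: a `k`-vector space with a coassociative counital coaction
`ρ : M → M ⊗ Γ`. -/
structure RComod (k : Type u) [Field k] (Γ : Type u)
    [AddCommGroup Γ] [Module k Γ] [Coalgebra k Γ] where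
  carrier : Type u
  [acg : AddCommGroup carrier]
  [mod : Module k carrier]
  coact : carrier →ₗ[k] carrier ⊗[k] Γ
  coassoc : (TensorProduct.assoc k carrier Γ Γ).toLinearMap ∘ₗ coact.rTensor Γ ∘ₗ coact
      = (Coalgebra.comul (R := k) (A := Γ)).lTensor carrier ∘ₗ coact
  counit_id : (TensorProduct.rid k carrier).toLinearMap ∘ₗ
      (Coalgebra.counit (R := k) (A := Γ)).lTensor carrier ∘ₗ coact = LinearMap.id

attribute [instance] RComod.acg RComod.mod

variable {k : Type u} [Field k] {Γ : Type u} [AddCommGroup Γ] [Module k Γ] [Coalgebra k Γ]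

/-- A morphism of right `Γ`-comodules. -/
@[ext] structure RComodHom (M N : RComod k Γ) where
  toFun : M.carrier →ₗ[k] N.carrier
  comm : N.coact ∘ₗ toFun = toFun.rTensor Γ ∘ₗ M.coact

/-- The identity comodule morphism. -/
def RComodHom.id (M : RComod k Γ) : RComodHom M M :=
  ⟨LinearMap.id, by simp⟩

/-- Composition of comodule morphisms. -/
def RComodHom.comp {M N P : RComod k Γ} (f : RComodHom N P) (g : RComodHom M N) :
    RComodHom M P :=
  ⟨f.toFun ∘ₗ g.toFun, by
    ext x
    have hf := LinearMap.congr_fun f.comm (g.toFun x)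
    have hg := LinearMap.congr_fun g.comm x
    simp only [LinearMap.comp_apply] at hf hg ⊢
    rw [hf, hg, ← LinearMap.comp_apply, ← LinearMap.rTensor_comp]⟩

/-- `g : B → C` is a split epimorphism of comodules. -/
def IsSplitEpi {B C : RComod k Γ} (g : RComodHom B C) : Prop :=
  ∃ s : RComodHom C B, g.comp s = RComodHom.id C

/-- `f : A → B` is a split monomorphism of comodules. -/
def IsSplitMono {A B : RComod k Γ} (f : RComodHom A B) : Prop :=
  ∃ r : RComodHom B A, r.comp f = RComodHom.id A

/-- `0 → A →f B →g C → 0` is a short exact sequence of comodules. -/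
structure IsExactSeq {A B C : RComod k Γ} (f : RComodHom A B) (g : RComodHom B C) : Prop where
  inj : Function.Injective f.toFun
  surj : Function.Surjective g.toFun
  exact : LinearMap.range f.toFun = LinearMap.ker g.toFun

/-- A comodule is indecomposable iff it is nonzero and its only idempotent
endomorphisms are `0` and the identity. -/
def Indecomposable (M : RComod k Γ) : Prop :=
  Nontrivial M.carrier ∧
    ∀ e : RComodHom M M, e.comp e = e → e = RComodHom.id M ∨ e.toFun = 0

/-- The space of comodule morphisms `M → N`, as a subspace of the linear maps. -/
def homSubmodule (M N : RComod k Γ) : Submodule k (M.carrier →ₗ[k] N.carrier) where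
  carrier := {f | N.coact ∘ₗ f = f.rTensor Γ ∘ₗ M.coact}
  add_mem' := by
    intro f g hf hg
    simp only [Set.mem_setOf_eq] at *
    rw [LinearMap.comp_add, hf, hg, LinearMap.rTensor_add, LinearMap.add_comp]
  zero_mem' := by simp
  smul_mem' := by
    intro c f hf
    simp only [Set.mem_setOf_eq] at *
    rw [LinearMap.comp_smul, hf, LinearMap.rTensor_smul, LinearMap.smul_comp]

/-- A comodule is quasifinite if `Hom(F, M)` is finite-dimensional for every
finite-dimensional comodule `F`. -/
def Quasifinite (M : RComod k Γ) : Prop :=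
  ∀ F : RComod k Γ, FiniteDimensional k F.carrier →
    FiniteDimensional k ↥(homSubmodule F M)

/-- `0 → A →f B →g C → 0` is an almost split (Auslander–Reiten) sequence. -/
structure IsAlmostSplit {A B C : RComod k Γ} (f : RComodHom A B) (g : RComodHom B C) :
    Prop where
  exact : IsExactSeq f g
  nonsplit : ¬ IsSplitEpi g
  indecA : Indecomposable A
  indecC : Indecomposable C
  lift : ∀ (X : RComod k Γ) (u : RComodHom X C), ¬ IsSplitEpi u →
    ∃ h : RComodHom X B, g.comp h = u
  extend : ∀ (X : RComod k Γ) (v : RComodHom A X), ¬ IsSplitMono v →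
    ∃ h : RComodHom B X, h.comp f = v

/-- `C` is projective in the category of right `Γ`-comodules. -/
def IsProjectiveComod (P : RComod k Γ) : Prop :=
  ∀ (B C : RComod k Γ) (g : RComodHom B C), Function.Surjective g.toFun →
    ∀ u : RComodHom P C, ∃ h : RComodHom P B, g.comp h = u

/-- A subspace of a comodule which is a subcomodule. -/
def IsSubcomodule (M : RComod k Γ) (p : Submodule k M.carrier) : Prop :=
  ∀ x ∈ p, M.coact x ∈ LinearMap.range (p.subtype.rTensor Γ)

end

noncomputable section

variable (k : Type u) [Field k]
variable (Γ : Type u) [AddCommGroup Γ] [Module k Γ] [Coalgebra k Γ]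

/-- The hit action is a right action: `(γ ↼ f) ↼ g = γ ↼ (f * g)`. -/
lemma rhit_rhit (f g : Module.Dual k Γ) :
    rhit k Γ g ∘ₗ rhit k Γ f = rhit k Γ (conv k Γ f g) := by
  have E1 : Coalgebra.comul ∘ₗ (TensorProduct.lid k Γ).toLinearMap ∘ₗ f.rTensor Γ
      = (TensorProduct.lid k (Γ ⊗[k] Γ)).toLinearMap ∘ₗ f.rTensor (Γ ⊗[k] Γ) ∘ₗ
          (Coalgebra.comul (R := k) (A := Γ)).lTensor Γ := by
    ext a b
    simp [TensorProduct.smul_tmul']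
  have E2 : (TensorProduct.lid k Γ).toLinearMap ∘ₗ g.rTensor Γ ∘ₗ
        (TensorProduct.lid k (Γ ⊗[k] Γ)).toLinearMap ∘ₗ f.rTensor (Γ ⊗[k] Γ) ∘ₗ
        (TensorProduct.assoc k Γ Γ Γ).toLinearMap
      = (TensorProduct.lid k Γ).toLinearMap ∘ₗ (LinearMap.mul' k k).rTensor Γ ∘ₗ
          (TensorProduct.map f g).rTensor Γ := by
    ext a b c
    simp [TensorProduct.smul_tmul', smul_smul, mul_comm]
  ext γ
  have h1 := LinearMap.congr_fun E1 (Coalgebra.comul (R := k) γ)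
  have hco := Coalgebra.coassoc_apply (R := k) γ
  have h2 := LinearMap.congr_fun E2
    ((Coalgebra.comul (R := k) (A := Γ)).rTensor Γ (Coalgebra.comul (R := k) γ))
  simp only [LinearMap.comp_apply, LinearEquiv.coe_coe] at h1 h2 ⊢
  simp only [rhit, conv, LinearMap.rTensor_comp, LinearMap.comp_apply,
    LinearEquiv.coe_coe]
  rw [h1, ← hco, h2]

/-- Let `e ∈ D Γ` be an idempotent and `Λ ⊆ Γ` a subcoalgebra,
carrying its canonical right `Γ`-comodule structure `ρ` (characterized by `hρ`: the
coaction is the restriction of the comultiplication).  Then every right `Γ`-comodule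
map `f : Λ → Γe` (encoded as a linear map `f : Λ → Γ` with range inside
`Γe = Γ ↼ e` that commutes with the coactions) has image contained in `Λe = Λ ↼ e`;
consequently `Hom_Γ(Λ, Γe) = Hom_Γ(Λ, Λe)`. -/
theorem comodule_map_from_subcoalgebra_lands_in_hit_of_subcoalgebra
    (e : Module.Dual k Γ) (he : conv k Γ e e = e)
    (Λ : Submodule k Γ) (hΛ : IsSubcoalgebra k Γ Λ)
    (ρ : ↥Λ →ₗ[k] ↥Λ ⊗[k] Γ)
    (hρ : ∀ x : ↥Λ, TensorProduct.map Λ.subtype LinearMap.id (ρ x)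
      = Coalgebra.comul (R := k) (x : Γ))
    (f : ↥Λ →ₗ[k] Γ)
    (hrange : ∀ x : ↥Λ, f x ∈ LinearMap.range (rhit k Γ e))
    (hcomod : ∀ x : ↥Λ, Coalgebra.comul (R := k) (f x)
      = TensorProduct.map f LinearMap.id (ρ x)) :
    ∀ x : ↥Λ, f x ∈ Submodule.map (rhit k Γ e) Λ := by
  intro x
  obtain ⟨γ, hγ⟩ := hrange x
  have hfix : rhit k Γ e (f x) = f x := by
    rw [← hγ]
    have h := LinearMap.congr_fun (rhit_rhit k Γ e e) γ
    rw [he] at h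
    simpa using h
  obtain ⟨t, ht⟩ := hΛ x x.2
  have hρx : ρ x = Λ.subtype.lTensor ↥Λ t := by
    apply Module.Flat.rTensor_preserves_injective_linearMap (M := Γ)
      Λ.subtype Λ.injective_subtype
    have h1 : Λ.subtype.rTensor Γ (ρ x) = Coalgebra.comul (R := k) (x : Γ) := hρ x
    have h2 : Λ.subtype.rTensor Γ (Λ.subtype.lTensor ↥Λ t)
        = Coalgebra.comul (R := k) (x : Γ) := by
      rw [← ht, ← LinearMap.comp_apply, LinearMap.rTensor_comp_lTensor]
    rw [h1, h2]
  have maps_eq : (TensorProduct.lid k Γ).toLinearMap ∘ₗ e.rTensor Γ ∘ₗ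
        (TensorProduct.map f LinearMap.id) ∘ₗ (Λ.subtype.lTensor ↥Λ)
      = Λ.subtype ∘ₗ (TensorProduct.lid k ↥Λ).toLinearMap ∘ₗ (e ∘ₗ f).rTensor ↥Λ := by
    ext a b
    simp [TensorProduct.smul_tmul']
  have key : f x = Λ.subtype ((TensorProduct.lid k ↥Λ) (((e ∘ₗ f).rTensor ↥Λ) t)) := by
    conv_lhs => rw [← hfix]
    have h3 := LinearMap.congr_fun maps_eq t
    simp only [LinearMap.comp_apply, LinearEquiv.coe_coe] at h3
    simp only [rhit, LinearMap.comp_apply, LinearEquiv.coe_coe, hcomod x, hρx]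
    exact h3
  refine Submodule.mem_map.mpr ⟨f x, ?_, hfix⟩
  rw [key]
  exact Submodule.coe_mem _

end
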